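/- Let n ≥ 1, ν ≥ 0, r > n/2, and let m be a continuous function on ℝ^{2n}∖{0} with A := sup_{k∈ℤ} ‖m_k^ν‖_{W^{(r,r),2}(ℝ^{2n})} < ∞. Then there is a constant C = C(n, r, Ψ) such that |m(ξ,η)| ≤ C·A·(|ξ|+|η|)^{−ν} for all (ξ,η) ≠ 0. -/

import Mathlib

open MeasureTheory Complex
open scoped ENNReal NNReal

noncomputable section

abbrev Euc (d : ℕ) : Type := EuclideanSpace ℝ (Fin d)

/-- The Fourier transform `𝓕f(ξ) = ∫ f(x) e^{−i x·ξ} dx`. -/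
def FT {d : ℕ} (f : Euc d → ℂ) (ξ : Euc d) : ℂ :=
  ∫ x : Euc d, Complex.exp (-(Complex.I * ((inner ℝ x ξ : ℝ) : ℂ))) * f x

/-- The fractional derivative `D^s f(x) = (2π)^{-d} ∫ |ξ|^s 𝓕f(ξ) e^{i x·ξ} dξ`. -/
def Dfrac {d : ℕ} (s : ℝ) (f : Euc d → ℂ) (x : Euc d) : ℂ :=
  ((((2 * Real.pi) ^ d)⁻¹ : ℝ) : ℂ) *
    ∫ ξ : Euc d, ((‖ξ‖ ^ s : ℝ) : ℂ) * Complex.exp (Complex.I * ((inner ℝ x ξ : ℝ) : ℂ)) * FT f ξ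

/-- The `L^p` quasinorm `(∫ F^p)^{1/p}` of an `ℝ≥0∞`-valued function on `ℝ^d`. -/
def LpQ {d : ℕ} (p : ℝ) (F : Euc d → ℝ≥0∞) : ℝ≥0∞ :=
  (∫⁻ x : Euc d, F x ^ p) ^ (1 / p)

/-- Pointwise extended-nonnegative norm of a complex-valued function. -/
def nn {α : Type*} (f : α → ℂ) : α → ℝ≥0∞ := fun x => (‖f x‖₊ : ℝ≥0∞)

/-- The bilinear multiplier operator
`T_m(f,g)(x) = ∫∫ m(ξ,η) e^{i x·(ξ+η)} 𝓕f(ξ) 𝓕g(η) dξ dη`. -/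
def Tm {d : ℕ} (m : Euc d × Euc d → ℂ) (f g : Euc d → ℂ) (x : Euc d) : ℂ :=
  ∫ ξη : Euc d × Euc d,
    m ξη * Complex.exp (Complex.I * ((inner ℝ x (ξη.1 + ξη.2) : ℝ) : ℂ)) * FT f ξη.1 * FT g ξη.2

/-- `D^s T_m(f,g)(x) = ∫∫ |ξ+η|^s m(ξ,η) e^{i x·(ξ+η)} 𝓕f(ξ) 𝓕g(η) dξ dη`. -/
def DsTm {d : ℕ} (s : ℝ) (m : Euc d × Euc d → ℂ) (f g : Euc d → ℂ) (x : Euc d) : ℂ :=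
  ∫ ξη : Euc d × Euc d,
    ((‖ξη.1 + ξη.2‖ ^ s : ℝ) : ℂ) * m ξη *
      Complex.exp (Complex.I * ((inner ℝ x (ξη.1 + ξη.2) : ℝ) : ℂ)) * FT f ξη.1 * FT g ξη.2

/-- The seminorm `‖Φ‖_{(ν,K)} = max_{|β|+|γ| ≤ K} sup_{(ξ,η) ≠ 0}
(|ξ|+|η|)^{|β|+|γ|-ν} |∂^β_ξ ∂^γ_η Φ(ξ,η)|` (formulated with total iterated
derivatives on `ℝ^{2d} ∖ {0}`). -/
def phiSeminorm {d : ℕ} (ν : ℝ) (K : ℕ) (Φ : Euc d × Euc d → ℂ) : ℝ≥0∞ :=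
  ⨆ (j : ℕ) (_ : j ≤ K) (ξη : Euc d × Euc d) (_ : ξη ≠ 0),
    ENNReal.ofReal
      ((‖ξη.1‖ + ‖ξη.2‖) ^ ((j : ℝ) - ν) *
        ‖iteratedFDerivWithin ℝ j Φ {(0 : Euc d × Euc d)}ᶜ ξη‖)

/-- The Fourier transform on `ℝ^{2d}` (viewed as `ℝ^d × ℝ^d`). -/
def FT2 {d : ℕ} (h : Euc d × Euc d → ℂ) (xy : Euc d × Euc d) : ℂ :=
  ∫ ξη : Euc d × Euc d,
    Complex.exp (-(Complex.I * (((inner ℝ ξη.1 xy.1 : ℝ) + (inner ℝ ξη.2 xy.2 : ℝ) : ℝ) : ℂ))) * h ξη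

/-- The product Sobolev norm `‖h‖_{W^{(r₁,r₂),2}}`. -/
def sobW {d : ℕ} (r₁ r₂ : ℝ) (h : Euc d × Euc d → ℂ) : ℝ≥0∞ :=
  (∫⁻ xy : Euc d × Euc d,
      ENNReal.ofReal ((1 + ‖xy.1‖ ^ 2) ^ r₁ * (1 + ‖xy.2‖ ^ 2) ^ r₂) *
        (‖FT2 h xy‖₊ : ℝ≥0∞) ^ (2 : ℝ)) ^ ((1 : ℝ) / 2)

/-- `m_k^ν(ξ,η) = 2^{kν} m(2^k ξ, 2^k η) Ψ(ξ,η)`. -/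
def mPiece {d : ℕ} (Ψ : Euc d × Euc d → ℂ) (m : Euc d × Euc d → ℂ) (ν : ℝ) (k : ℤ) :
    Euc d × Euc d → ℂ :=
  fun ξη => ((((2 : ℝ) ^ ((k : ℝ) * ν)) : ℝ) : ℂ) * m ((2 : ℝ) ^ k • ξη) * Ψ ξη

/-- `ℝ^{n+1}` split as `ℝ_t × ℝ^n_x`: the point with first coordinate `t` and remaining
coordinates `x`. -/
def ap (n : ℕ) (t : ℝ) (x : Euc n) : Euc (n + 1) :=
  (EuclideanSpace.equiv (Fin (n + 1)) ℝ).symm (Fin.cons t (EuclideanSpace.equiv (Fin n) ℝ x))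

/-- The mixed Lebesgue quasinorm `(∫_ℝ (∫_{ℝ^n} F^q dx)^{p/q} dt)^{1/p}` of an
`ℝ≥0∞`-valued function on `ℝ^{n+1}`. -/
def MixQ (n : ℕ) (p q : ℝ) (F : Euc (n + 1) → ℝ≥0∞) : ℝ≥0∞ :=
  (∫⁻ t : ℝ, (∫⁻ x : Euc n, F (ap n t x) ^ q) ^ (p / q)) ^ (1 / p)

/-- The Hardy–Littlewood maximal function. -/
def HLM {d : ℕ} (h : Euc d → ℝ≥0∞) (x : Euc d) : ℝ≥0∞ :=
  ⨆ (ρ : ℝ) (_ : 0 < ρ),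
    (volume (Metric.ball x ρ))⁻¹ * ∫⁻ y in Metric.ball x ρ, h y


def Phim (d : ℕ) : (Euc d × Euc d) ≃ᵐ Euc (d + d) :=
  (((MeasurableEquiv.toLp 2 (Fin d → ℝ)).symm).prodCongr
      ((MeasurableEquiv.toLp 2 (Fin d → ℝ)).symm)).trans
    (((MeasurableEquiv.sumPiEquivProdPi (fun _ : Fin d ⊕ Fin d => ℝ)).symm).trans
      ((MeasurableEquiv.piCongrLeft (fun _ : Fin (d + d) => ℝ) finSumFinEquiv).trans
        ((MeasurableEquiv.toLp 2 (Fin (d + d) → ℝ)).symm).symm))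

theorem Phim_mp (d : ℕ) : MeasurePreserving (Phim d) volume volume :=
  (((EuclideanSpace.volume_preserving_symm_measurableEquiv_toLp (Fin d)).prod
      (EuclideanSpace.volume_preserving_symm_measurableEquiv_toLp (Fin d))).trans
    ((volume_measurePreserving_sumPiEquivProdPi_symm (fun _ : Fin d ⊕ Fin d => ℝ)).trans
      ((volume_measurePreserving_piCongrLeft (fun _ : Fin (d + d) => ℝ) finSumFinEquiv).trans
        (EuclideanSpace.volume_preserving_symm_measurableEquiv_toLp (Fin (d + d))).symm)))

theorem Phim_apply (d : ℕ) (p : Euc d × Euc d) (j : Fin d ⊕ Fin d) :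
    Phim d p (finSumFinEquiv j) = Sum.elim (p.1 : Fin d → ℝ) (p.2 : Fin d → ℝ) j := by
  show (MeasurableEquiv.piCongrLeft (fun _ : Fin (d + d) => ℝ) finSumFinEquiv)
      ((MeasurableEquiv.sumPiEquivProdPi (fun _ : Fin d ⊕ Fin d => ℝ)).symm
        (⇑p.1, ⇑p.2)) (finSumFinEquiv j) = _
  rw [MeasurableEquiv.coe_piCongrLeft, Equiv.piCongrLeft_apply_apply]
  cases j <;> rfl

theorem Phim_inner (d : ℕ) (p q : Euc d × Euc d) :
    (inner ℝ (Phim d p) (Phim d q) : ℝ) = (inner ℝ p.1 q.1 : ℝ) + (inner ℝ p.2 q.2 : ℝ) := by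
  simp only [PiLp.inner_apply, RCLike.inner_apply, conj_trivial]
  rw [← Equiv.sum_comp finSumFinEquiv (fun i => Phim d q i * Phim d p i)]
  simp only [Phim_apply]
  rw [Fintype.sum_sum_type]
  rfl

theorem Phim_cont (d : ℕ) : Continuous (Phim d) := by
  have h1 : Continuous fun p : Euc d × Euc d => (fun i => Phim d p i : Fin (d + d) → ℝ) := by
    apply continuous_pi; intro i
    obtain ⟨j, rfl⟩ := finSumFinEquiv.surjective i
    simp only [Phim_apply]
    cases j with
    | inl j =>
        simp only [Sum.elim_inl]
        exact (continuous_apply j).comp ((EuclideanSpace.equiv (Fin d) ℝ).continuous.comp continuous_fst)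
    | inr j =>
        simp only [Sum.elim_inr]
        exact (continuous_apply j).comp ((EuclideanSpace.equiv (Fin d) ℝ).continuous.comp continuous_snd)
  exact (EuclideanSpace.equiv (Fin (d + d)) ℝ).symm.continuous.comp h1

theorem Phim_symm_apply (d : ℕ) (u : Euc (d + d)) (j : Fin d) :
    ((Phim d).symm u).1 j = u (finSumFinEquiv (Sum.inl j)) ∧
    ((Phim d).symm u).2 j = u (finSumFinEquiv (Sum.inr j)) := by
  have := Phim_apply d ((Phim d).symm u)
  rw [MeasurableEquiv.apply_symm_apply] at this
  exact ⟨(this (Sum.inl j)).symm, (this (Sum.inr j)).symm⟩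

theorem Phim_symm_cont (d : ℕ) : Continuous ((Phim d).symm) := by
  have c1 : Continuous fun u : Euc (d + d) => ((Phim d).symm u).1 := by
    have h1 : Continuous fun u : Euc (d + d) =>
        (fun j => u (finSumFinEquiv (Sum.inl j)) : Fin d → ℝ) :=
      continuous_pi fun j => (EuclideanSpace.proj (finSumFinEquiv (Sum.inl j))).continuous
    have h2 := (EuclideanSpace.equiv (Fin d) ℝ).symm.continuous.comp h1
    convert h2
    ext j
    exact (Phim_symm_apply d _ j).1
  have c2 : Continuous fun u : Euc (d + d) => ((Phim d).symm u).2 := by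
    have h1 : Continuous fun u : Euc (d + d) =>
        (fun j => u (finSumFinEquiv (Sum.inr j)) : Fin d → ℝ) :=
      continuous_pi fun j => (EuclideanSpace.proj (finSumFinEquiv (Sum.inr j))).continuous
    have h2 := (EuclideanSpace.equiv (Fin d) ℝ).symm.continuous.comp h1
    convert h2
    ext j
    exact (Phim_symm_apply d _ j).2
  exact c1.prodMk c2

def PhimH (d : ℕ) : (Euc d × Euc d) ≃ₜ Euc (d + d) where
  toEquiv := (Phim d).toEquiv
  continuous_toFun := Phim_cont d
  continuous_invFun := Phim_symm_cont d

theorem Phim_symm_smul (d : ℕ) (c : ℝ) (u : Euc (d + d)) :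
    (Phim d).symm (c • u) = c • (Phim d).symm u := by
  have h1 := Phim_symm_apply d u
  have h2 := Phim_symm_apply d (c • u)
  refine Prod.ext ?_ ?_ <;> ext j
  · rw [(h2 j).1]
    show (c • u) (finSumFinEquiv (Sum.inl j)) = (c • ((Phim d).symm u).1) j
    simp [PiLp.smul_apply, (h1 j).1]
  · rw [(h2 j).2]
    show (c • u) (finSumFinEquiv (Sum.inr j)) = (c • ((Phim d).symm u).2) j
    simp [PiLp.smul_apply, (h1 j).2]


theorem weight_lt_top {d : ℕ} {r : ℝ} (hr : (d : ℝ) / 2 < r) :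
    ∫⁻ x : Euc d, ENNReal.ofReal ((1 + ‖x‖ ^ 2) ^ (-r)) < ⊤ := by
  have h2 : (Module.finrank ℝ (Euc d) : ℝ) < 2 * r := by
    rw [finrank_euclideanSpace_fin]; linarith
  have hint := integrable_rpow_neg_one_add_norm_sq (E := Euc d) (μ := volume) h2
  have heq : ∀ x : Euc d, ((1 : ℝ) + ‖x‖ ^ 2) ^ (-(2 * r) / 2) = (1 + ‖x‖ ^ 2) ^ (-r) := by
    intro x; congr 1; ring
  simp only [heq] at hint
  exact hint.lintegral_lt_top

def myFT {k : ℕ} (H : Euc k → ℂ) (v : Euc k) : ℂ :=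
  ∫ u : Euc k, Complex.exp (-(Complex.I * ((inner ℝ u v : ℝ) : ℂ))) * H u

theorem ft2_eq {d : ℕ} (h : Euc d × Euc d → ℂ) (xy : Euc d × Euc d) :
    FT2 h xy = myFT (fun u => h ((Phim d).symm u)) (Phim d xy) := by
  unfold FT2 myFT
  rw [← MeasurePreserving.integral_comp ((Phim_mp d).symm)
      (MeasurableEquiv.measurableEmbedding _)]
  congr 1; funext u
  have hi := Phim_inner d ((Phim d).symm u) xy
  rw [MeasurableEquiv.apply_symm_apply] at hi
  rw [← hi]

open scoped FourierTransform in
theorem fourier_eq {k : ℕ} (H : Euc k → ℂ) (w : Euc k) :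
    𝓕 H w = myFT H ((2 * Real.pi) • w) := by
  rw [Real.fourier_eq']
  unfold myFT
  congr 1; funext u
  rw [smul_eq_mul]
  congr 1
  rw [real_inner_smul_right]
  push_cast
  ring

open scoped FourierTransform in
theorem emb {d : ℕ} {r : ℝ} (hr : (d : ℝ) / 2 < r) :
    ∃ E : ℝ≥0∞, E ≠ ⊤ ∧ ∀ h : Euc d × Euc d → ℂ, Continuous h → HasCompactSupport h →
      sobW r r h ≠ ⊤ → ∀ p : Euc d × Euc d, (‖h p‖₊ : ℝ≥0∞) ≤ E * sobW r r h := by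
  have hr0 : 0 < r := lt_of_le_of_lt (by positivity) hr
  set I : ℝ≥0∞ := ∫⁻ x : Euc d, ENNReal.ofReal ((1 + ‖x‖ ^ 2) ^ (-r)) with hI
  have hIfin : I < ⊤ := weight_lt_top hr
  set c : ℝ≥0∞ := ENNReal.ofReal |(((2 * Real.pi) ^ (d + d) : ℝ))⁻¹| with hc
  refine ⟨c ^ ((1 : ℝ) / 2) * (I * I) ^ ((1 : ℝ) / 2), ?_, ?_⟩
  · exact ENNReal.mul_ne_top (ENNReal.rpow_ne_top_of_nonneg (by norm_num) ENNReal.ofReal_ne_top)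
      (ENNReal.rpow_ne_top_of_nonneg (by norm_num) (ENNReal.mul_ne_top hIfin.ne hIfin.ne))
  intro h hcont hsupp hWfin p
  set H : Euc (d + d) → ℂ := fun u => h ((Phim d).symm u) with hH
  have HC : Continuous H := hcont.comp (Phim_symm_cont d)
  have Hsupp : HasCompactSupport H := by
    have : H = h ∘ (PhimH d).symm := rfl
    rw [this]
    exact hsupp.comp_homeomorph (PhimH d).symm
  have Hint : Integrable H := HC.integrable_of_hasCompactSupport Hsupp
  -- continuity of the Fourier transform of H
  have hFTcont : Continuous (𝓕 H) :=
    VectorFourier.fourierIntegral_continuous Real.continuous_fourierChar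
      (by exact continuous_inner) Hint
  -- myFT of H in terms of FT2
  have hmyeq : ∀ u : Euc (d + d), myFT H u = FT2 h ((Phim d).symm u) := by
    intro u
    rw [ft2_eq h ((Phim d).symm u), MeasurableEquiv.apply_symm_apply]
  -- weight function
  set w₁ : Euc (d + d) → ℝ := fun u =>
    (1 + ‖((Phim d).symm u).1‖ ^ 2) ^ r * (1 + ‖((Phim d).symm u).2‖ ^ 2) ^ r with hw₁
  have hw₁pos : ∀ u, 0 < w₁ u := fun u => by
    apply mul_pos <;> exact Real.rpow_pos_of_pos (by positivity) _
  have hw₁cont : Continuous w₁ := by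
    have h1 : Continuous fun u : Euc (d + d) => (1 + ‖((Phim d).symm u).1‖ ^ 2 : ℝ) :=
      continuous_const.add (((continuous_fst.comp (Phim_symm_cont d)).norm).pow 2)
    have h2 : Continuous fun u : Euc (d + d) => (1 + ‖((Phim d).symm u).2‖ ^ 2 : ℝ) :=
      continuous_const.add (((continuous_snd.comp (Phim_symm_cont d)).norm).pow 2)
    exact (h1.rpow_const fun u => Or.inl (by positivity)).mul
      (h2.rpow_const fun u => Or.inl (by positivity))
  -- the squared Sobolev norm transferred
  have sob_sq : ∫⁻ u : Euc (d + d), ENNReal.ofReal (w₁ u) * (‖myFT H u‖₊ : ℝ≥0∞) ^ (2 : ℝ)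
      = (sobW r r h) ^ (2 : ℝ) := by
    have hX : (sobW r r h) ^ (2 : ℝ) = ∫⁻ xy : Euc d × Euc d,
        ENNReal.ofReal ((1 + ‖xy.1‖ ^ 2) ^ r * (1 + ‖xy.2‖ ^ 2) ^ r) *
          (‖FT2 h xy‖₊ : ℝ≥0∞) ^ (2 : ℝ) := by
      rw [sobW, ← ENNReal.rpow_mul]
      norm_num
    rw [hX]
    have hFT2cont : Continuous (FT2 h) := by
      have : FT2 h = fun xy => myFT H (Phim d xy) := by
        funext xy; exact ft2_eq h xy
      rw [this]
      have hmy : Continuous (myFT H) := by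
        have : myFT H = fun v => 𝓕 H ((2 * Real.pi)⁻¹ • v) := by
          funext v
          rw [fourier_eq, smul_smul, mul_inv_cancel₀ (by positivity), one_smul]
        rw [this]
        exact hFTcont.comp (continuous_const_smul _)
      exact hmy.comp (Phim_cont d)
    have hmeas : Measurable fun xy : Euc d × Euc d =>
        ENNReal.ofReal ((1 + ‖xy.1‖ ^ 2) ^ r * (1 + ‖xy.2‖ ^ 2) ^ r) *
          (‖FT2 h xy‖₊ : ℝ≥0∞) ^ (2 : ℝ) := by
      have wcont : Continuous fun xy : Euc d × Euc d =>
          ((1 + ‖xy.1‖ ^ 2) ^ r * (1 + ‖xy.2‖ ^ 2) ^ r : ℝ) := by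
        have w1 : Continuous fun xy : Euc d × Euc d => (1 + ‖xy.1‖ ^ 2 : ℝ) :=
          continuous_const.add ((continuous_fst.norm).pow 2)
        have w2 : Continuous fun xy : Euc d × Euc d => (1 + ‖xy.2‖ ^ 2 : ℝ) :=
          continuous_const.add ((continuous_snd.norm).pow 2)
        exact (w1.rpow_const fun u => Or.inl (by positivity)).mul
          (w2.rpow_const fun u => Or.inl (by positivity))
      exact ((ENNReal.continuous_ofReal.comp wcont).measurable).mul
        ((hFT2cont.measurable.nnnorm.coe_nnreal_ennreal).pow_const _)
    rw [← MeasurePreserving.lintegral_comp ((Phim_mp d).symm) hmeas]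
    refine lintegral_congr fun u => ?_
    rw [hmyeq u]
  -- Cauchy-Schwarz setup
  set a : Euc (d + d) → ℝ≥0∞ := fun w => ENNReal.ofReal (w₁ ((2 * Real.pi) • w)) with ha
  have ha_meas : Measurable a :=
    (ENNReal.continuous_ofReal.comp (hw₁cont.comp (continuous_const_smul _))).measurable
  have ha0 : ∀ w, a w ≠ 0 := fun w => by
    simp only [ha, ne_eq, ENNReal.ofReal_eq_zero, not_le]
    exact hw₁pos _
  have hatop : ∀ w, a w ≠ ⊤ := fun w => ENNReal.ofReal_ne_top
  have hmycont : Continuous (myFT H) := by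
    have : myFT H = fun v => 𝓕 H ((2 * Real.pi)⁻¹ • v) := by
      funext v
      rw [fourier_eq, smul_smul, mul_inv_cancel₀ (by positivity), one_smul]
    rw [this]
    exact hFTcont.comp (continuous_const_smul _)
  have key : ∫⁻ w : Euc (d + d), (‖𝓕 H w‖₊ : ℝ≥0∞) ≤
      (∫⁻ w, a w * (‖𝓕 H w‖₊ : ℝ≥0∞) ^ (2 : ℝ)) ^ ((1 : ℝ) / 2) *
      (∫⁻ w, (a w)⁻¹) ^ ((1 : ℝ) / 2) := by
    have hpq : Real.HolderConjugate 2 2 := ⟨by norm_num, by norm_num, by norm_num⟩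
    have hfm : AEMeasurable (fun w => a w ^ ((1 : ℝ) / 2) * (‖𝓕 H w‖₊ : ℝ≥0∞)) volume :=
      ((ha_meas.pow_const _).mul hFTcont.measurable.nnnorm.coe_nnreal_ennreal).aemeasurable
    have hgm : AEMeasurable (fun w => a w ^ (-(1 : ℝ) / 2)) volume :=
      (ha_meas.pow_const _).aemeasurable
    have := ENNReal.lintegral_mul_le_Lp_mul_Lq volume hpq hfm hgm
    have hfg : ∀ w, (a w ^ ((1 : ℝ) / 2) * (‖𝓕 H w‖₊ : ℝ≥0∞)) * a w ^ (-(1 : ℝ) / 2)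
        = (‖𝓕 H w‖₊ : ℝ≥0∞) := by
      intro w
      rw [mul_comm (a w ^ ((1 : ℝ) / 2)) _, mul_assoc, ← ENNReal.rpow_add _ _ (ha0 w) (hatop w)]
      norm_num
    have hf2 : ∀ w, (a w ^ ((1 : ℝ) / 2) * (‖𝓕 H w‖₊ : ℝ≥0∞)) ^ (2 : ℝ)
        = a w * (‖𝓕 H w‖₊ : ℝ≥0∞) ^ (2 : ℝ) := by
      intro w
      rw [ENNReal.mul_rpow_of_nonneg _ _ (by norm_num : (0:ℝ) ≤ 2), ← ENNReal.rpow_mul]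
      norm_num
    have hg2 : ∀ w, (a w ^ (-(1 : ℝ) / 2)) ^ (2 : ℝ) = (a w)⁻¹ := by
      intro w
      rw [← ENNReal.rpow_mul]
      norm_num
      exact ENNReal.rpow_neg_one _
    simp only [Pi.mul_apply, hfg, hf2, hg2] at this
    exact this
  -- first factor: scaling change of variables
  have hGmeas : Measurable fun u : Euc (d + d) =>
      ENNReal.ofReal (w₁ u) * (‖myFT H u‖₊ : ℝ≥0∞) ^ (2 : ℝ) :=
    ((ENNReal.continuous_ofReal.comp hw₁cont).measurable).mul
      ((hmycont.measurable.nnnorm.coe_nnreal_ennreal).pow_const _)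
  have T1sq : ∫⁻ w, a w * (‖𝓕 H w‖₊ : ℝ≥0∞) ^ (2 : ℝ) = c * (sobW r r h) ^ (2 : ℝ) := by
    have heq : ∀ w : Euc (d + d), a w * (‖𝓕 H w‖₊ : ℝ≥0∞) ^ (2 : ℝ)
        = ENNReal.ofReal (w₁ ((2 * Real.pi) • w)) *
          (‖myFT H ((2 * Real.pi) • w)‖₊ : ℝ≥0∞) ^ (2 : ℝ) := by
      intro w; rw [ha, fourier_eq]
    simp only [heq]
    have hmap := MeasureTheory.Measure.map_addHaar_smul (μ := (volume : Measure (Euc (d + d))))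
      (r := 2 * Real.pi) (by positivity)
    calc ∫⁻ w, ENNReal.ofReal (w₁ ((2 * Real.pi) • w)) *
          (‖myFT H ((2 * Real.pi) • w)‖₊ : ℝ≥0∞) ^ (2 : ℝ)
        = ∫⁻ u, ENNReal.ofReal (w₁ u) * (‖myFT H u‖₊ : ℝ≥0∞) ^ (2 : ℝ)
            ∂(Measure.map (((2 * Real.pi) : ℝ) • ·) volume) := by
          rw [lintegral_map hGmeas (measurable_const_smul _)]
      _ = c * (sobW r r h) ^ (2 : ℝ) := by
          rw [hmap, lintegral_smul_measure, sob_sq, hc, finrank_euclideanSpace_fin, smul_eq_mul]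
  -- second factor
  have T2sq : ∫⁻ w, (a w)⁻¹ ≤ I * I := by
    have hpt : ∀ w : Euc (d + d), (a w)⁻¹ ≤
        ENNReal.ofReal ((1 + ‖((Phim d).symm w).1‖ ^ 2) ^ (-r)) *
        ENNReal.ofReal ((1 + ‖((Phim d).symm w).2‖ ^ 2) ^ (-r)) := by
      intro w
      have hmono : w₁ w ≤ w₁ ((2 * Real.pi) • w) := by
        rw [hw₁]
        simp only [Phim_symm_smul]
        have hn1 : ‖((Phim d).symm w).1‖ ≤ ‖((2 * Real.pi) • (Phim d).symm w).1‖ := by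
          rw [Prod.smul_fst, norm_smul]
          refine le_mul_of_one_le_left (norm_nonneg _) ?_
          rw [Real.norm_eq_abs, abs_of_pos (by positivity : (0:ℝ) < 2 * Real.pi)]
          nlinarith [Real.pi_gt_three]
        have hn2 : ‖((Phim d).symm w).2‖ ≤ ‖((2 * Real.pi) • (Phim d).symm w).2‖ := by
          rw [Prod.smul_snd, norm_smul]
          refine le_mul_of_one_le_left (norm_nonneg _) ?_
          rw [Real.norm_eq_abs, abs_of_pos (by positivity : (0:ℝ) < 2 * Real.pi)]
          nlinarith [Real.pi_gt_three]
        have h1 : ((1 : ℝ) + ‖((Phim d).symm w).1‖ ^ 2) ^ r ≤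
            (1 + ‖((2 * Real.pi) • (Phim d).symm w).1‖ ^ 2) ^ r := by
          apply Real.rpow_le_rpow (by positivity) _ hr0.le
          nlinarith [norm_nonneg ((Phim d).symm w).1]
        have h2 : ((1 : ℝ) + ‖((Phim d).symm w).2‖ ^ 2) ^ r ≤
            (1 + ‖((2 * Real.pi) • (Phim d).symm w).2‖ ^ 2) ^ r := by
          apply Real.rpow_le_rpow (by positivity) _ hr0.le
          nlinarith [norm_nonneg ((Phim d).symm w).2]
        have hp1 : (0:ℝ) < (1 + ‖((Phim d).symm w).1‖ ^ 2) ^ r :=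
          Real.rpow_pos_of_pos (by positivity) _
        have hp2 : (0:ℝ) < (1 + ‖((Phim d).symm w).2‖ ^ 2) ^ r :=
          Real.rpow_pos_of_pos (by positivity) _
        nlinarith
      have h1 : (a w)⁻¹ ≤ (ENNReal.ofReal (w₁ w))⁻¹ :=
        ENNReal.inv_le_inv' (ENNReal.ofReal_le_ofReal hmono)
      refine h1.trans_eq ?_
      rw [← ENNReal.ofReal_inv_of_pos (hw₁pos w), hw₁]
      rw [mul_inv, ← Real.rpow_neg (by positivity), ← Real.rpow_neg (by positivity)]
      rw [ENNReal.ofReal_mul (by positivity)]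
    calc ∫⁻ w, (a w)⁻¹
        ≤ ∫⁻ w, ENNReal.ofReal ((1 + ‖((Phim d).symm w).1‖ ^ 2) ^ (-r)) *
            ENNReal.ofReal ((1 + ‖((Phim d).symm w).2‖ ^ 2) ^ (-r)) :=
          lintegral_mono hpt
      _ = ∫⁻ xy : Euc d × Euc d, ENNReal.ofReal ((1 + ‖xy.1‖ ^ 2) ^ (-r)) *
            ENNReal.ofReal ((1 + ‖xy.2‖ ^ 2) ^ (-r)) := by
          refine MeasurePreserving.lintegral_comp ((Phim_mp d).symm)
            (f := fun xy : Euc d × Euc d => ENNReal.ofReal ((1 + ‖xy.1‖ ^ 2) ^ (-r)) *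
              ENNReal.ofReal ((1 + ‖xy.2‖ ^ 2) ^ (-r))) ?_
          have w1 : Continuous fun xy : Euc d × Euc d => ((1 + ‖xy.1‖ ^ 2 : ℝ)) :=
            continuous_const.add ((continuous_fst.norm).pow 2)
          have w2 : Continuous fun xy : Euc d × Euc d => ((1 + ‖xy.2‖ ^ 2 : ℝ)) :=
            continuous_const.add ((continuous_snd.norm).pow 2)
          exact ((ENNReal.continuous_ofReal.comp
              (w1.rpow_const fun u => Or.inl (by positivity))).measurable).mul
            ((ENNReal.continuous_ofReal.comp
              (w2.rpow_const fun u => Or.inl (by positivity))).measurable)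
      _ = I * I := by
          rw [MeasureTheory.Measure.volume_eq_prod]
          have w1 : Continuous fun x : Euc d => ((1 + ‖x‖ ^ 2 : ℝ)) :=
            continuous_const.add (continuous_norm.pow 2)
          have hma : AEMeasurable (fun x : Euc d => ENNReal.ofReal ((1 + ‖x‖ ^ 2) ^ (-r)))
              (volume : Measure (Euc d)) :=
            ((ENNReal.continuous_ofReal.comp
              (w1.rpow_const fun u => Or.inl (by positivity))).measurable).aemeasurable
          exact MeasureTheory.lintegral_prod_mul hma hma
  -- finiteness of the Fourier transform integral
  have hFTfin : ∫⁻ w : Euc (d + d), (‖𝓕 H w‖₊ : ℝ≥0∞) < ⊤ := by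
    refine lt_of_le_of_lt key ?_
    apply ENNReal.mul_lt_top
    · rw [T1sq]
      exact ENNReal.rpow_lt_top_of_nonneg (by norm_num)
        (ENNReal.mul_ne_top ENNReal.ofReal_ne_top
          (ENNReal.rpow_ne_top_of_nonneg (by norm_num) hWfin))
    · exact ENNReal.rpow_lt_top_of_nonneg (by norm_num)
        (lt_of_le_of_lt T2sq (ENNReal.mul_lt_top hIfin hIfin)).ne
  have HFint : Integrable (𝓕 H) := by
    constructor
    · exact hFTcont.aestronglyMeasurable
    · exact hFTfin
  have hinv := HC.fourierInv_fourier_eq Hint HFint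
  -- pointwise bound
  have hHp : h p = H (Phim d p) := by
    rw [hH]; simp
  rw [hHp]
  have hbound : (‖H (Phim d p)‖₊ : ℝ≥0∞) ≤ ∫⁻ w : Euc (d + d), (‖𝓕 H w‖₊ : ℝ≥0∞) := by
    conv_lhs => rw [← hinv]
    rw [Real.fourierInv_eq]
    refine le_trans (enorm_integral_le_lintegral_enorm _) ?_
    apply lintegral_mono
    intro u
    have hone : ∀ z : Circle, ‖(z : ℂ)‖₊ = 1 := fun z => by
      ext; simp [Circle.norm_coe]
    simp [Circle.smul_def, nnnorm_mul, hone, enorm_eq_nnnorm]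
  refine hbound.trans (key.trans ?_)
  rw [T1sq]
  rw [ENNReal.mul_rpow_of_nonneg _ _ (by norm_num : (0:ℝ) ≤ 1/2)]
  rw [← ENNReal.rpow_mul, show (2:ℝ) * (1/2) = 1 by norm_num, ENNReal.rpow_one, mul_assoc]
  rw [mul_comm (sobW r r h) _, ← mul_assoc]
  gcongr



theorem mPiece_cont {d : ℕ} (Ψ : SchwartzMap (Euc d × Euc d) ℂ)
    (hΨsupp : Function.support ⇑Ψ ⊆ {ξη : Euc d × Euc d |
      1 / 2 ≤ Real.sqrt (‖ξη.1‖ ^ 2 + ‖ξη.2‖ ^ 2) ∧ Real.sqrt (‖ξη.1‖ ^ 2 + ‖ξη.2‖ ^ 2) ≤ 2})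
    (m : Euc d × Euc d → ℂ) (hm : ContinuousOn m {(0 : Euc d × Euc d)}ᶜ) (ν : ℝ) (k : ℤ) :
    Continuous (mPiece ⇑Ψ m ν k) ∧ HasCompactSupport (mPiece ⇑Ψ m ν k) := by
  have hzero : ∀ v : Euc d × Euc d, ‖v‖ < 1/5 → mPiece ⇑Ψ m ν k v = 0 := by
    intro v hv
    have hΨ0 : Ψ v = 0 := by
      by_contra hne
      have hmem := hΨsupp (Function.mem_support.2 hne)
      have h1 : ‖v.1‖ ≤ ‖v‖ := le_max_left _ _
      have h2 : ‖v.2‖ ≤ ‖v‖ := le_max_right _ _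
      have hle : Real.sqrt (‖v.1‖ ^ 2 + ‖v.2‖ ^ 2) ≤ ‖v.1‖ + ‖v.2‖ := by
        rw [show ‖v.1‖ + ‖v.2‖ = Real.sqrt ((‖v.1‖ + ‖v.2‖)^2) from
          (Real.sqrt_sq (by positivity)).symm]
        apply Real.sqrt_le_sqrt
        nlinarith [norm_nonneg v.1, norm_nonneg v.2]
      have : Real.sqrt (‖v.1‖ ^ 2 + ‖v.2‖ ^ 2) < 1/2 := by
        refine lt_of_le_of_lt hle ?_
        have := hv
        linarith [h1.trans_lt hv, h2.trans_lt hv]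
      linarith [hmem.1]
    simp [mPiece, hΨ0]
  constructor
  · rw [continuous_iff_continuousAt]
    intro u
    by_cases hu : u = 0
    · subst hu
      have hev : mPiece ⇑Ψ m ν k =ᶠ[nhds (0 : Euc d × Euc d)] fun _ => (0 : ℂ) := by
        filter_upwards [Metric.ball_mem_nhds (0 : Euc d × Euc d) (by norm_num : (0:ℝ) < 1/5)]
          with v hv
        exact hzero v (by simpa [dist_eq_norm] using hv)
      exact ContinuousAt.congr continuousAt_const hev.symm
    · have hsmul : (2 : ℝ) ^ k • u ≠ 0 :=
        smul_ne_zero (zpow_ne_zero k (two_ne_zero)) hu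
      have hc1 : ContinuousAt (fun v : Euc d × Euc d => m ((2 : ℝ) ^ k • v)) u := by
        have hmc : ContinuousAt m ((2 : ℝ) ^ k • u) :=
          hm.continuousAt (isOpen_compl_singleton.mem_nhds (by simpa using hsmul))
        exact hmc.comp (continuous_const_smul _).continuousAt
      exact (continuousAt_const.mul hc1).mul Ψ.continuous.continuousAt
  · have hsub : Function.support (mPiece ⇑Ψ m ν k) ⊆ Metric.closedBall (0 : Euc d × Euc d) 2 := by
      intro v hv
      have hΨne : Ψ v ≠ 0 := by
        intro h0
        apply hv
        simp [mPiece, h0]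
      have hmem := hΨsupp (Function.mem_support.2 hΨne)
      have h2 : Real.sqrt (‖v.1‖ ^ 2 + ‖v.2‖ ^ 2) ≤ 2 := hmem.2
      have hb1 : ‖v.1‖ ≤ 2 := by
        have : ‖v.1‖ = Real.sqrt (‖v.1‖ ^ 2) := (Real.sqrt_sq (norm_nonneg _)).symm
        rw [this]
        exact le_trans (Real.sqrt_le_sqrt (by nlinarith [sq_nonneg ‖v.2‖])) h2
      have hb2 : ‖v.2‖ ≤ 2 := by
        have : ‖v.2‖ = Real.sqrt (‖v.2‖ ^ 2) := (Real.sqrt_sq (norm_nonneg _)).symm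
        rw [this]
        exact le_trans (Real.sqrt_le_sqrt (by nlinarith [sq_nonneg ‖v.1‖])) h2
      simp only [Metric.mem_closedBall, dist_zero_right]
      exact max_le hb1 hb2
    have : tsupport (mPiece ⇑Ψ m ν k) ⊆ Metric.closedBall 0 2 :=
      closure_minimal hsub Metric.isClosed_closedBall
    exact IsCompact.of_isClosed_subset (isCompact_closedBall 0 2) (isClosed_closure) this


/-- The size condition `|m(ξ,η)| ≲ (|ξ|+|η|)^{-ν}` follows from the uniform product
Sobolev bounds on the dyadic pieces `m_k^ν` (from the proof of Theorem 3.4 of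
Hart–Torres–Wu). -/
theorem statement7 (n : ℕ) (hn : 1 ≤ n) (ν : ℝ) (hν0 : 0 ≤ ν)
    (r : ℝ) (hr : (n : ℝ) / 2 < r)
    (Ψ : SchwartzMap (Euc n × Euc n) ℂ)
    (hΨsupp : Function.support ⇑Ψ ⊆ {ξη : Euc n × Euc n |
      1 / 2 ≤ Real.sqrt (‖ξη.1‖ ^ 2 + ‖ξη.2‖ ^ 2) ∧ Real.sqrt (‖ξη.1‖ ^ 2 + ‖ξη.2‖ ^ 2) ≤ 2})
    (hΨsum : ∀ ξη : Euc n × Euc n, ξη ≠ 0 → ∑' k : ℤ, Ψ ((2 : ℝ) ^ (-k) • ξη) = 1)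
    (m : Euc n × Euc n → ℂ) (hm : ContinuousOn m {(0 : Euc n × Euc n)}ᶜ)
    (hA : (⨆ k : ℤ, sobW r r (mPiece ⇑Ψ m ν k)) ≠ ⊤) :
    ∃ C : ℝ, 0 ≤ C ∧ ∀ ξη : Euc n × Euc n, ξη ≠ 0 →
      (‖m ξη‖₊ : ℝ≥0∞) ≤
        ENNReal.ofReal C * (⨆ k : ℤ, sobW r r (mPiece ⇑Ψ m ν k)) *
          ENNReal.ofReal ((‖ξη.1‖ + ‖ξη.2‖) ^ (-ν)) := by
  obtain ⟨E, hEfin, hE⟩ := emb (d := n) hr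
  set S := ⨆ k : ℤ, sobW r r (mPiece ⇑Ψ m ν k) with hS
  set CC : ℝ≥0∞ := 3 * ENNReal.ofReal ((4 : ℝ) ^ ν * (2 : ℝ) ^ (ν / 2)) * E with hCC
  have hCCne : CC ≠ ⊤ :=
    ENNReal.mul_ne_top (ENNReal.mul_ne_top (by simp) ENNReal.ofReal_ne_top) hEfin
  refine ⟨CC.toReal, ENNReal.toReal_nonneg, ?_⟩
  intro ξη hξη
  rw [ENNReal.ofReal_toReal hCCne]
  -- basic quantities
  set s1 := ‖ξη.1‖ with hs1
  set s2 := ‖ξη.2‖ with hs2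
  have hs1n : 0 ≤ s1 := norm_nonneg _
  have hs2n : 0 ≤ s2 := norm_nonneg _
  have hs : 0 < s1 + s2 := by
    rcases lt_or_ge 0 (s1 + s2) with h | h
    · exact h
    · exfalso
      apply hξη
      have h1 : s1 = 0 := by linarith
      have h2 : s2 = 0 := by linarith
      have e1 : ξη.1 = 0 := norm_eq_zero.1 h1
      have e2 : ξη.2 = 0 := norm_eq_zero.1 h2
      exact Prod.ext e1 e2
  set R := Real.sqrt (s1 ^ 2 + s2 ^ 2) with hRdef
  have hR : 0 < R := Real.sqrt_pos.2 (by nlinarith [mul_pos hs hs, mul_nonneg hs1n hs2n])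
  have hsR : s1 + s2 ≤ Real.sqrt 2 * R := by
    rw [hRdef, ← Real.sqrt_mul (by norm_num : (0:ℝ) ≤ 2)]
    rw [show s1 + s2 = Real.sqrt ((s1 + s2) ^ 2) from (Real.sqrt_sq (by positivity)).symm]
    apply Real.sqrt_le_sqrt
    nlinarith [sq_nonneg (s1 - s2)]
  set k0 := Int.log 2 R with hk0def
  have hk0a : (2 : ℝ) ^ k0 ≤ R := Int.zpow_log_le_self (by norm_num) hR
  have hk0b : R < (2 : ℝ) ^ (k0 + 1) := Int.lt_zpow_succ_log_self (by norm_num) R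
  -- norm of scaled points
  have hnorm : ∀ k : ℤ, Real.sqrt (‖((2 : ℝ) ^ (-k) • ξη).1‖ ^ 2 + ‖((2 : ℝ) ^ (-k) • ξη).2‖ ^ 2)
      = (2 : ℝ) ^ (-k) * R := by
    intro k
    have hpos : (0 : ℝ) < (2 : ℝ) ^ (-k) := by positivity
    rw [Prod.smul_fst, Prod.smul_snd, norm_smul, norm_smul, Real.norm_eq_abs,
      abs_of_pos hpos, hRdef]
    rw [mul_pow, mul_pow, ← mul_add, Real.sqrt_mul (sq_nonneg _), Real.sqrt_sq hpos.le]
  -- support constraints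
  have hsupp0 : ∀ k : ℤ, Ψ ((2 : ℝ) ^ (-k) • ξη) ≠ 0 →
      (2 : ℝ) ^ (k - 1) ≤ R ∧ R ≤ (2 : ℝ) ^ (k + 1) := by
    intro k hk
    have hmem := hΨsupp (Function.mem_support.2 hk)
    rw [Set.mem_setOf_eq, hnorm k] at hmem
    have hpk : (0 : ℝ) < (2 : ℝ) ^ k := by positivity
    have e1 : (2 : ℝ) ^ k * (2 : ℝ) ^ (-k) = 1 := by
      rw [← zpow_add₀ (two_ne_zero : (2:ℝ) ≠ 0)]; simp
    constructor
    · have := mul_le_mul_of_nonneg_left hmem.1 hpk.le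
      rw [← mul_assoc, e1, one_mul] at this
      calc (2 : ℝ) ^ (k - 1) = (2 : ℝ) ^ k * (1/2) := by
            rw [zpow_sub₀ (two_ne_zero : (2:ℝ) ≠ 0)]; norm_num; ring
        _ ≤ R := this
    · have := mul_le_mul_of_nonneg_left hmem.2 hpk.le
      rw [← mul_assoc, e1, one_mul] at this
      calc R ≤ (2 : ℝ) ^ k * 2 := this
        _ = (2 : ℝ) ^ (k + 1) := by
            rw [zpow_add₀ (two_ne_zero : (2:ℝ) ≠ 0)]; norm_num
  have hmemF : ∀ k : ℤ, Ψ ((2 : ℝ) ^ (-k) • ξη) ≠ 0 →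
      k ∈ ({k0 - 1, k0, k0 + 1} : Finset ℤ) := by
    intro k hk
    obtain ⟨h1, h2⟩ := hsupp0 k hk
    have hk1 : k - 1 < k0 + 1 :=
      (zpow_lt_zpow_iff_right₀ (one_lt_two : (1:ℝ) < 2)).1 (lt_of_le_of_lt h1 hk0b)
    have hk2 : k0 ≤ k + 1 :=
      (zpow_le_zpow_iff_right₀ (one_lt_two : (1:ℝ) < 2)).1 (le_trans hk0a h2)
    simp only [Finset.mem_insert, Finset.mem_singleton]
    omega
  -- decomposition
  have hdecomp : m ξη = ∑ k ∈ ({k0 - 1, k0, k0 + 1} : Finset ℤ),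
      m ξη * Ψ ((2 : ℝ) ^ (-k) • ξη) := by
    have h1 := hΨsum ξη hξη
    have h2 : m ξη = ∑' k : ℤ, m ξη * Ψ ((2 : ℝ) ^ (-k) • ξη) := by
      rw [tsum_mul_left, h1, mul_one]
    conv_lhs => rw [h2]
    apply tsum_eq_sum
    intro k hk
    have : Ψ ((2 : ℝ) ^ (-k) • ξη) = 0 := by
      by_contra hne
      exact hk (hmemF k hne)
    rw [this, mul_zero]
  -- per-term bound
  have hterm : ∀ k ∈ ({k0 - 1, k0, k0 + 1} : Finset ℤ),
      (‖m ξη * Ψ ((2 : ℝ) ^ (-k) • ξη)‖₊ : ℝ≥0∞) ≤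
        ENNReal.ofReal ((4 : ℝ) ^ ν * (2 : ℝ) ^ (ν / 2)) *
          ENNReal.ofReal ((s1 + s2) ^ (-ν)) * E * S := by
    intro k hkF
    by_cases hΨ0 : Ψ ((2 : ℝ) ^ (-k) • ξη) = 0
    · rw [hΨ0, mul_zero]
      simp
    -- relation to mPiece
    set v := (2 : ℝ) ^ (-k) • ξη with hv
    have hback : (2 : ℝ) ^ k • v = ξη := by
      rw [hv, smul_smul, ← zpow_add₀ (two_ne_zero : (2:ℝ) ≠ 0)]
      simp
    have hpiece : mPiece ⇑Ψ m ν k v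
        = (((2 : ℝ) ^ ((k : ℝ) * ν) : ℝ) : ℂ) * (m ξη * Ψ v) := by
      rw [mPiece, hback]; ring
    have hcpos : (0 : ℝ) < (2 : ℝ) ^ ((k : ℝ) * ν) := Real.rpow_pos_of_pos two_pos _
    have hT : m ξη * Ψ v = (((((2 : ℝ) ^ ((k : ℝ) * ν))⁻¹ : ℝ)) : ℂ) * mPiece ⇑Ψ m ν k v := by
      rw [hpiece, ← mul_assoc, ← Complex.ofReal_mul, inv_mul_cancel₀ hcpos.ne', Complex.ofReal_one,
        one_mul]
    -- embedding bound for the piece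
    obtain ⟨hcont, hsupp⟩ := mPiece_cont Ψ hΨsupp m hm ν k
    have hWle : sobW r r (mPiece ⇑Ψ m ν k) ≤ S := le_iSup (fun j => sobW r r (mPiece ⇑Ψ m ν j)) k
    have hWfin : sobW r r (mPiece ⇑Ψ m ν k) ≠ ⊤ := fun htop => hA (top_le_iff.1 (htop ▸ hWle))
    have hEb := hE (mPiece ⇑Ψ m ν k) hcont hsupp hWfin v
    -- the scalar bound
    have hkge : k0 - 1 ≤ k := by
      simp only [Finset.mem_insert, Finset.mem_singleton] at hkF
      omega
    have hbk : (s1 + s2) / (4 * Real.sqrt 2) ≤ (2 : ℝ) ^ k := by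
      have c1 : (2 : ℝ) ^ (k0 - 1) ≤ (2 : ℝ) ^ k :=
        zpow_le_zpow_right₀ (one_le_two : (1:ℝ) ≤ 2) hkge
      have c2 : R / 4 ≤ (2 : ℝ) ^ (k0 - 1) := by
        have : (2 : ℝ) ^ (k0 - 1) = (2 : ℝ) ^ (k0 + 1) / 4 := by
          rw [zpow_sub₀ (two_ne_zero : (2:ℝ) ≠ 0), zpow_add₀ (two_ne_zero : (2:ℝ) ≠ 0)]
          norm_num
          ring
        rw [this]
        linarith
      have c3 : (s1 + s2) / (4 * Real.sqrt 2) ≤ R / 4 := by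
        rw [div_le_div_iff₀ (by positivity) (by norm_num)]
        have h2 : (0:ℝ) < Real.sqrt 2 := by positivity
        nlinarith [hsR]
      linarith
    have hscalar : ((2 : ℝ) ^ ((k : ℝ) * ν))⁻¹ ≤ (4 : ℝ) ^ ν * (2 : ℝ) ^ (ν / 2) * (s1 + s2) ^ (-ν) := by
      have e1 : ((2 : ℝ) ^ ((k : ℝ) * ν))⁻¹ = ((2 : ℝ) ^ (k : ℤ)) ^ (-ν) := by
        rw [← Real.rpow_intCast (2 : ℝ) k, ← Real.rpow_mul (by norm_num : (0:ℝ) ≤ 2),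
          ← Real.rpow_neg_one ((2:ℝ) ^ ((k:ℝ) * ν)), ← Real.rpow_mul (by norm_num : (0:ℝ) ≤ 2)]
        congr 1
        ring
      rw [e1]
      have hb0 : (0 : ℝ) < (s1 + s2) / (4 * Real.sqrt 2) := by positivity
      have step := Real.rpow_le_rpow_of_nonpos hb0 hbk (neg_nonpos_of_nonneg hν0)
      refine step.trans_eq ?_
      rw [Real.div_rpow (by positivity) (by positivity)]
      rw [Real.rpow_neg (by positivity : (0:ℝ) ≤ s1 + s2),
        Real.rpow_neg (by positivity : (0:ℝ) ≤ 4 * Real.sqrt 2)]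
      have h42 : (4 * Real.sqrt 2 : ℝ) ^ ν = 4 ^ ν * 2 ^ (ν / 2) := by
        rw [Real.mul_rpow (by norm_num) (Real.sqrt_nonneg 2)]
        congr 1
        rw [Real.sqrt_eq_rpow, ← Real.rpow_mul (by norm_num : (0:ℝ) ≤ 2)]
        congr 1
        ring
      rw [div_eq_mul_inv, inv_inv, h42]
      ring
    -- combine
    calc (‖m ξη * Ψ v‖₊ : ℝ≥0∞)
        = ENNReal.ofReal (((2 : ℝ) ^ ((k : ℝ) * ν))⁻¹) * (‖mPiece ⇑Ψ m ν k v‖₊ : ℝ≥0∞) := by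
          rw [hT]
          rw [nnnorm_mul]
          rw [ENNReal.coe_mul]
          congr 1
          rw [← ENNReal.ofReal_coe_nnreal]
          congr 1
          rw [coe_nnnorm]
          rw [Complex.norm_real, Real.norm_eq_abs, abs_of_pos (by positivity)]
      _ ≤ ENNReal.ofReal ((4 : ℝ) ^ ν * (2 : ℝ) ^ (ν / 2) * (s1 + s2) ^ (-ν)) *
            (E * sobW r r (mPiece ⇑Ψ m ν k)) := by
          exact mul_le_mul' (ENNReal.ofReal_le_ofReal hscalar) hEb
      _ = ENNReal.ofReal ((4 : ℝ) ^ ν * (2 : ℝ) ^ (ν / 2)) * ENNReal.ofReal ((s1 + s2) ^ (-ν)) *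
            E * sobW r r (mPiece ⇑Ψ m ν k) := by
          rw [ENNReal.ofReal_mul (by positivity)]
          ring
      _ ≤ ENNReal.ofReal ((4 : ℝ) ^ ν * (2 : ℝ) ^ (ν / 2)) * ENNReal.ofReal ((s1 + s2) ^ (-ν)) *
            E * S := by gcongr
  -- sum up
  have hsum : (‖m ξη‖₊ : ℝ≥0∞) ≤
      3 * (ENNReal.ofReal ((4 : ℝ) ^ ν * (2 : ℝ) ^ (ν / 2)) *
        ENNReal.ofReal ((s1 + s2) ^ (-ν)) * E * S) := by
    rw [hdecomp]
    calc ((‖∑ k ∈ ({k0 - 1, k0, k0 + 1} : Finset ℤ), m ξη * Ψ ((2 : ℝ) ^ (-k) • ξη)‖₊ : ℝ≥0) : ℝ≥0∞)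
        ≤ ∑ k ∈ ({k0 - 1, k0, k0 + 1} : Finset ℤ),
            (‖m ξη * Ψ ((2 : ℝ) ^ (-k) • ξη)‖₊ : ℝ≥0∞) := by
          rw [← ENNReal.coe_finset_sum]
          exact ENNReal.coe_le_coe.2 (nnnorm_sum_le _ _)
      _ ≤ ∑ k ∈ ({k0 - 1, k0, k0 + 1} : Finset ℤ),
            (ENNReal.ofReal ((4 : ℝ) ^ ν * (2 : ℝ) ^ (ν / 2)) *
              ENNReal.ofReal ((s1 + s2) ^ (-ν)) * E * S) := Finset.sum_le_sum hterm
      _ ≤ 3 * (ENNReal.ofReal ((4 : ℝ) ^ ν * (2 : ℝ) ^ (ν / 2)) *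
            ENNReal.ofReal ((s1 + s2) ^ (-ν)) * E * S) := by
          rw [Finset.sum_const]
          have hcard : ({k0 - 1, k0, k0 + 1} : Finset ℤ).card ≤ 3 := by
            apply le_trans (Finset.card_insert_le _ _)
            have h2 := Finset.card_insert_le k0 ({k0 + 1} : Finset ℤ)
            simp only [Finset.card_singleton] at h2
            omega
          calc (({k0 - 1, k0, k0 + 1} : Finset ℤ).card : ℕ) • _
              ≤ 3 • ((ENNReal.ofReal ((4 : ℝ) ^ ν * (2 : ℝ) ^ (ν / 2)) *
                ENNReal.ofReal ((s1 + s2) ^ (-ν)) * E * S)) :=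
                smul_le_smul_of_nonneg_right hcard (by positivity)
            _ = 3 * _ := by
                rw [nsmul_eq_mul]
                norm_num
  refine hsum.trans ?_
  apply le_of_eq
  rw [hCC]
  ring
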